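/- Let Q ⊂ ℝ^N be a cube, f ∈ L¹(Q; ℝ^d), and let g : Q → ℝ^d be measurable with g(x) ∈ ⟨⟨f⟩⟩_Q for a.e. x ∈ Q. Then there exists a measurable function K : Q×Q → ℝ with ‖K‖_∞ ≤ |Q|⁻¹ such that g(x) = ∫_Q K(x,y) f(y) dy for a.e. x ∈ Q. -/

import Mathlib

open MeasureTheory Set Matrix
open scoped ENNReal BigOperators NNReal

noncomputable section

namespace CBD

/-- The Euclidean norm of a vector in `ℝ^n` given as a plain function. -/
def vnorm {n : ℕ} (v : Fin n → ℝ) : ℝ := Real.sqrt (∑ i, v i ^ 2)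

/-- An axis-parallel half-open cube in `ℝ^N`. -/
structure Cube (N : ℕ) where
  corner : Fin N → ℝ
  side : ℝ
  side_pos : 0 < side

namespace Cube

variable {N : ℕ}

/-- The subset of `ℝ^N` determined by the cube. -/
def set (Q : Cube N) : Set (Fin N → ℝ) :=
  {x | ∀ i, Q.corner i ≤ x i ∧ x i < Q.corner i + Q.side}

/-- The volume `|Q|` of the cube. -/
def vol (Q : Cube N) : ℝ := Q.side ^ N

/-- The concentric dilation `rQ` (intended for `r ≥ 1`; implemented with `max r 1`). -/
def dilate (Q : Cube N) (r : ℝ) : Cube N where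
  corner := fun i => Q.corner i + Q.side / 2 - max r 1 * Q.side / 2
  side := max r 1 * Q.side
  side_pos := mul_pos (lt_of_lt_of_le one_pos (le_max_right r 1)) Q.side_pos

/-- `Q` belongs to the standard dyadic lattice `D`:
`Q = 2^{-k}([0,1)^N + m)` for some `k ∈ ℤ`, `m ∈ ℤ^N`. -/
def IsDyadic (Q : Cube N) : Prop :=
  ∃ (k : ℤ) (m : Fin N → ℤ), Q.side = (2:ℝ) ^ (-k) ∧ ∀ i, Q.corner i = (2:ℝ) ^ (-k) * (m i : ℝ)

/-- The subcube of `Q` of dyadic generation `k` in position `m`. -/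
def subCube (Q : Cube N) (k : ℕ) (m : Fin N → ℕ) : Cube N where
  corner := fun i => Q.corner i + Q.side * (m i : ℝ) / 2 ^ k
  side := Q.side / 2 ^ k
  side_pos := div_pos Q.side_pos (by positivity)

/-- `R` is a dyadic subcube of `Q` (relative dyadic lattice `D(Q)`, including `Q` itself). -/
def IsDyadicSub (Q R : Cube N) : Prop :=
  ∃ (k : ℕ) (m : Fin N → ℕ), (∀ i, m i < 2 ^ k) ∧ R = Q.subCube k m

end Cube

variable {N d : ℕ}

/-- The dyadic lattice, as a set of cubes. -/
def dyadicCubes (N : ℕ) : Set (Cube N) := {Q | Q.IsDyadic}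

/-- All cubes in `ℝ^N`. -/
def allCubes (N : ℕ) : Set (Cube N) := Set.univ

/-- The average `⟨g⟩_Q = |Q|⁻¹ ∫_Q g`. -/
def avg (Q : Cube N) (g : (Fin N → ℝ) → ℝ) : ℝ :=
  (Q.vol)⁻¹ * ∫ y in Q.set, g y

/-- The entrywise average `⟨W⟩_Q` of a matrix-valued function. -/
def matAvg (Q : Cube N) (W : (Fin N → ℝ) → Matrix (Fin d) (Fin d) ℝ) :
    Matrix (Fin d) (Fin d) ℝ :=
  Matrix.of fun i j => avg Q fun x => W x i j

/-- The positive semidefinite square root of a matrix (junk value `0` off psd matrices). -/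
def msqrt (A : Matrix (Fin d) (Fin d) ℝ) : Matrix (Fin d) (Fin d) ℝ :=
  letI := Classical.dec A.PosSemidef
  if h : A.PosSemidef then
    (h.1.eigenvectorUnitary : Matrix (Fin d) (Fin d) ℝ) *
      Matrix.diagonal ((RCLike.ofReal : ℝ → ℝ) ∘ Real.sqrt ∘ h.1.eigenvalues) *
      (star h.1.eigenvectorUnitary : Matrix (Fin d) (Fin d) ℝ)
  else 0

/-- The `ℓ² → ℓ²` operator norm of a `d × d` matrix. -/
def matOpNorm (A : Matrix (Fin d) (Fin d) ℝ) : ℝ :=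
  sSup {t | ∃ v : Fin d → ℝ, vnorm v ≤ 1 ∧ t = vnorm (A.mulVec v)}

/-- A `d`-dimensional matrix weight: locally integrable, positive semidefinite values. -/
def IsMatrixWeight (W : (Fin N → ℝ) → Matrix (Fin d) (Fin d) ℝ) : Prop :=
  (∀ x, (W x).PosSemidef) ∧ ∀ i j, LocallyIntegrable (fun x => W x i j) volume

/-- A scalar weight: nonnegative and locally integrable. -/
def IsScalarWeight (w : (Fin N → ℝ) → ℝ) : Prop :=
  (∀ x, 0 ≤ w x) ∧ LocallyIntegrable w volume

/-- The maximal function adapted to the cube `Q`: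
`M_Q w(x) = sup {⟨w⟩_R : R ∈ D(Q), x ∈ R}` (and `0` off `Q`). -/
def MQ (Q : Cube N) (w : (Fin N → ℝ) → ℝ) (x : Fin N → ℝ) : ℝ :=
  sSup ({0} ∪ {t | ∃ R : Cube N, Q.IsDyadicSub R ∧ x ∈ R.set ∧ t = avg R w})

/-- Admissible `A∞` constants of a scalar weight, over a collection `𝒬` of cubes. -/
def AinftyOn (𝒬 : Set (Cube N)) (w : (Fin N → ℝ) → ℝ) : Set ℝ :=
  {C | 0 ≤ C ∧ ∀ Q ∈ 𝒬, avg Q (MQ Q w) ≤ C * avg Q w}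

/-- The `A∞` characteristic (best admissible constant) of a scalar weight. -/
def AinftyChar (𝒬 : Set (Cube N)) (w : (Fin N → ℝ) → ℝ) : ℝ := sInf (AinftyOn 𝒬 w)

/-- The scalar weight `w_e(x) = (W(x)e, e)` associated to a matrix weight and `e ∈ ℝ^d`. -/
def we (W : (Fin N → ℝ) → Matrix (Fin d) (Fin d) ℝ) (e : Fin d → ℝ) :
    (Fin N → ℝ) → ℝ := fun x => e ⬝ᵥ (W x).mulVec e

/-- Admissible constants for the scalar `A∞` characteristic of a matrix weight. -/
def matAinftyScOn (𝒬 : Set (Cube N)) (W : (Fin N → ℝ) → Matrix (Fin d) (Fin d) ℝ) : Set ℝ :=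
  {C | 0 ≤ C ∧ ∀ e : Fin d → ℝ, ∀ Q ∈ 𝒬, avg Q (MQ Q (we W e)) ≤ C * avg Q (we W e)}

/-- The scalar `A∞` characteristic `[W]^{sc}_{A∞} = sup_e [w_e]_{A∞}` of a matrix weight. -/
def matAinftyScChar (𝒬 : Set (Cube N)) (W : (Fin N → ℝ) → Matrix (Fin d) (Fin d) ℝ) : ℝ :=
  sInf (matAinftyScOn 𝒬 W)

/-- Admissible constants for the two-weight matrix `A₂` characteristic
`[W,V]_{A₂} = sup_Q ‖⟨W⟩_Q^{1/2} ⟨V⟩_Q^{1/2}‖²`. -/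
def A2pairOn (𝒬 : Set (Cube N)) (W V : (Fin N → ℝ) → Matrix (Fin d) (Fin d) ℝ) : Set ℝ :=
  {C | ∀ Q ∈ 𝒬, matOpNorm (msqrt (matAvg Q W) * msqrt (matAvg Q V)) ^ 2 ≤ C}

/-- The two-weight matrix `A₂` characteristic. -/
def A2pairChar (𝒬 : Set (Cube N)) (W V : (Fin N → ℝ) → Matrix (Fin d) (Fin d) ℝ) : ℝ :=
  sInf (A2pairOn 𝒬 W V)

/-- Admissible constants for the scalar `A₂` characteristic `sup_Q ⟨w⟩_Q ⟨w⁻¹⟩_Q`. -/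
def scalarA2On (𝒬 : Set (Cube N)) (w : (Fin N → ℝ) → ℝ) : Set ℝ :=
  {C | ∀ Q ∈ 𝒬, avg Q w * avg Q (fun x => (w x)⁻¹) ≤ C}

/-- The scalar `A₂` characteristic. -/
def scalarA2Char (𝒬 : Set (Cube N)) (w : (Fin N → ℝ) → ℝ) : ℝ := sInf (scalarA2On 𝒬 w)

/-- An `ω`-Calderón–Zygmund operator on `ℝ^N`: a linear operator, bounded on `L²`,
with a kernel representation off the support, whose kernel satisfies the standard size
condition and the `ω`-smoothness condition, `ω` being a modulus of continuity. -/
structure CZO (N : ℕ) where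
  op : ((Fin N → ℝ) → ℝ) →ₗ[ℝ] ((Fin N → ℝ) → ℝ)
  K : (Fin N → ℝ) → (Fin N → ℝ) → ℝ
  ω : ℝ → ℝ
  CK : ℝ
  normBound : ℝ
  bounded : ∀ f : (Fin N → ℝ) → ℝ, MemLp f 2 volume →
    MemLp (op f) 2 volume ∧
      eLpNorm (op f) 2 volume ≤ ENNReal.ofReal normBound * eLpNorm f 2 volume
  repr : ∀ f : (Fin N → ℝ) → ℝ, MemLp f 2 volume → ∀ x ∉ tsupport f,
    op f x = ∫ y, K x y * f y
  size : ∀ x y : Fin N → ℝ, x ≠ y → |K x y| ≤ CK / vnorm (x - y) ^ N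
  smooth : ∀ x x' y : Fin N → ℝ, x ≠ y → vnorm (x - x') ≤ vnorm (x - y) / 2 →
    |K x y - K x' y| + |K y x - K y x'| ≤
      ω (vnorm (x - x') / vnorm (x - y)) / vnorm (x - y) ^ N
  omega_zero : ω 0 = 0
  omega_mono : MonotoneOn ω (Set.Ici 0)
  omega_subadd : ∀ s t : ℝ, 0 ≤ s → 0 ≤ t → ω (s + t) ≤ ω s + ω t

/-- The Dini condition `∫₀¹ ω(t) dt/t < ∞` for a modulus of continuity. -/
def Dini (ω : ℝ → ℝ) : Prop :=
  IntegrableOn (fun t => ω t / t) (Set.Ioc (0:ℝ) 1) volume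

/-- Componentwise (i.e. `T ⊗ I_d`) action of a scalar operator on vector-valued functions. -/
def vecApply (T : ((Fin N → ℝ) → ℝ) → ((Fin N → ℝ) → ℝ))
    (f : (Fin N → ℝ) → Fin d → ℝ) : (Fin N → ℝ) → Fin d → ℝ :=
  fun x i => T (fun y => f y i) x

/-- `T` maps `L²` to `L²` with operator norm at most `M`. -/
def L2OpNormLe (T : ((Fin N → ℝ) → ℝ) → ((Fin N → ℝ) → ℝ)) (M : ℝ) : Prop :=
  ∀ f : (Fin N → ℝ) → ℝ, MemLp f 2 volume →
    MemLp (T f) 2 volume ∧ eLpNorm (T f) 2 volume ≤ ENNReal.ofReal M * eLpNorm f 2 volume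

/-- `T` is bounded on `L²`. -/
def L2Bounded (T : ((Fin N → ℝ) → ℝ) → ((Fin N → ℝ) → ℝ)) : Prop :=
  ∃ M : ℝ, L2OpNormLe T M

/-- The family of kernels of a (generalized big) Haar shift of complexity `r`:
`K_Q` is supported on `Q × Q`, bounded by `|Q|⁻¹`, constant on products of
`(r+1)`-st generation dyadic subcubes of `Q`, and vanishes for non-dyadic `Q`. -/
structure HaarShiftKernel (N : ℕ) (r : ℕ) where
  K : Cube N → (Fin N → ℝ) → (Fin N → ℝ) → ℝ
  measK : ∀ Q : Cube N, Measurable (Function.uncurry (K Q))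
  suppK : ∀ Q : Cube N, ∀ x y, K Q x y ≠ 0 → x ∈ Q.set ∧ y ∈ Q.set
  bddK : ∀ Q : Cube N, ∀ x y, |K Q x y| ≤ (Cube.vol Q)⁻¹
  constK : ∀ Q : Cube N, ∀ m m' : Fin N → ℕ,
    (∀ i, m i < 2 ^ (r + 1)) → (∀ i, m' i < 2 ^ (r + 1)) →
    ∀ x x' y y', x ∈ (Q.subCube (r + 1) m).set → x' ∈ (Q.subCube (r + 1) m).set →
      y ∈ (Q.subCube (r + 1) m').set → y' ∈ (Q.subCube (r + 1) m').set →
      K Q x y = K Q x' y'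
  dyadicK : ∀ Q : Cube N, ¬Q.IsDyadic → K Q = 0

/-- The operator `𝕊 = Σ_{Q ∈ D} T_Q` associated to a family of Haar shift kernels. -/
def hsApply {r : ℕ} (S : HaarShiftKernel N r) (f : (Fin N → ℝ) → ℝ) : (Fin N → ℝ) → ℝ :=
  fun x => ∑' Q : Cube N, ∫ y, S.K Q x y * f y

/-- The cancellation conditions `T_Q 1_Q = 0`, `T_Q^* 1_Q = 0` making a generalized
big Haar shift a big Haar shift. -/
def IsBigShift {r : ℕ} (S : HaarShiftKernel N r) : Prop :=
  (∀ Q : Cube N, ∀ x, (∫ y, S.K Q x y) = 0) ∧ (∀ Q : Cube N, ∀ y, (∫ x, S.K Q x y) = 0)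

/-- The sublattice `D̃ = ∪_j D_{k+(r+1)j}` of the dyadic lattice. -/
def Dtilde (N r k : ℕ) : Set (Cube N) :=
  {Q | Q.IsDyadic ∧ ∃ j : ℤ, Q.side = (2:ℝ) ^ (-((k : ℤ) + (r + 1) * j))}

/-- The Haar shift is `r`-separated with lattice parameter `k`:
`T_Q ≠ 0` only for `Q ∈ D̃`. -/
def SeparatedKernel {r : ℕ} (S : HaarShiftKernel N r) (k : ℕ) : Prop :=
  ∀ Q : Cube N, S.K Q ≠ 0 → Q ∈ Dtilde N r k

/-- The martingale difference `Δ_R b = Σ_{R' child of R} ⟨b⟩_{R'} 1_{R'} - ⟨b⟩_R 1_R`. -/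
def haarDelta (R : Cube N) (b : (Fin N → ℝ) → ℝ) (x : Fin N → ℝ) : ℝ :=
  (∑ m : Fin N → Fin 2, Set.indicator (R.subCube 1 fun i => (m i : ℕ)).set
      (fun _ => avg (R.subCube 1 fun i => (m i : ℕ)) b) x)
    - Set.indicator R.set (fun _ => avg R b) x

/-- The paraproduct of order `r` with symbol `b`:
`Π_b^r f = Σ_{Q ∈ D} ⟨f⟩_Q Σ_{R ∈ ch^r Q} Δ_R b`. -/
def paraApply (r : ℕ) (b f : (Fin N → ℝ) → ℝ) : (Fin N → ℝ) → ℝ :=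
  fun x => ∑' Q : dyadicCubes N,
    avg Q.val f * ∑ m : Fin N → Fin (2 ^ r), haarDelta (Q.val.subCube r fun i => (m i : ℕ)) b x

/-- The paraproduct `Π_b^r` is `r`-separated with lattice parameter `k`. -/
def SeparatedPara (r : ℕ) (b : (Fin N → ℝ) → ℝ) (k : ℕ) : Prop :=
  ∀ Q : Cube N, Q.IsDyadic →
    (∃ x, (∑ m : Fin N → Fin (2 ^ r), haarDelta (Q.subCube r fun i => (m i : ℕ)) b x) ≠ 0) →
    Q ∈ Dtilde N r k

/-- `T` is a big Haar shift of complexity `r`, or a paraproduct of order `r`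
with `L²` norm at most `2^{-Nr/2}`. -/
def IsShiftOrParaproduct (N r : ℕ) (T : ((Fin N → ℝ) → ℝ) → ((Fin N → ℝ) → ℝ)) : Prop :=
  (∃ S : HaarShiftKernel N r, IsBigShift S ∧ L2Bounded (hsApply S) ∧ T = hsApply S) ∨
  (∃ b : (Fin N → ℝ) → ℝ, LocallyIntegrable b volume ∧
      L2OpNormLe (paraApply r b) (Real.sqrt ((2:ℝ) ^ (N * r)))⁻¹ ∧ T = paraApply r b)

/-- `T` is an `r`-separated big Haar shift of complexity `r`, or an `r`-separated
paraproduct of order `r` with `L²` norm at most `2^{-Nr/2}`; `k ≤ r` is the lattice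
parameter of the separation sublattice `D̃`. -/
def IsSeparatedShiftOrParaproduct (N r k : ℕ)
    (T : ((Fin N → ℝ) → ℝ) → ((Fin N → ℝ) → ℝ)) : Prop :=
  k ≤ r ∧
  ((∃ S : HaarShiftKernel N r, IsBigShift S ∧ L2Bounded (hsApply S) ∧
      SeparatedKernel S k ∧ T = hsApply S) ∨
   (∃ b : (Fin N → ℝ) → ℝ, LocallyIntegrable b volume ∧
      L2OpNormLe (paraApply r b) (Real.sqrt ((2:ℝ) ^ (N * r)))⁻¹ ∧
      SeparatedPara r b k ∧ T = paraApply r b))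

/-- The convex-body average `⟨⟨f⟩⟩_Q = {⟨φ f⟩_Q : ‖φ‖_∞ ≤ 1}`. -/
def cbAvg (Q : Cube N) (f : (Fin N → ℝ) → Fin d → ℝ) : Set (Fin d → ℝ) :=
  {v | ∃ φ : (Fin N → ℝ) → ℝ, Measurable φ ∧ (∀ x, |φ x| ≤ 1) ∧
        v = fun i => avg Q fun x => φ x * f x i}

/-- A weakly `η`-sparse family of cubes: there are pairwise disjoint measurable
subsets `E_Q ⊆ Q` with `|E_Q| ≥ η |Q|`. -/
def WeaklySparse (S : Set (Cube N)) (η : ℝ) : Prop :=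
  ∃ E : Cube N → Set (Fin N → ℝ),
    (∀ Q ∈ S, E Q ⊆ Q.set ∧ MeasurableSet (E Q) ∧ ENNReal.ofReal (η * Q.vol) ≤ volume (E Q)) ∧
    S.PairwiseDisjoint E

/-- The value at `x` of the convex-body sparse operator
`𝐋_S f = Σ_{Q ∈ S} ⟨⟨f⟩⟩_Q 1_Q` (an infinite Minkowski sum): all convergent sums
`Σ_Q g(Q)` with `g(Q) ∈ ⟨⟨f⟩⟩_Q` whenever `Q ∈ S` contains `x`, and `g(Q) = 0` otherwise. -/
def sparseBody (S : Set (Cube N)) (f : (Fin N → ℝ) → Fin d → ℝ) (x : Fin N → ℝ) :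
    Set (Fin d → ℝ) :=
  {v | ∃ g : Cube N → Fin d → ℝ,
        (∀ Q : Cube N, Q ∈ S ∧ x ∈ Q.set → g Q ∈ cbAvg Q f) ∧
        (∀ Q : Cube N, ¬(Q ∈ S ∧ x ∈ Q.set) → g Q = 0) ∧ HasSum g v}

/-- The `S`-children of `Q`: maximal cubes of `S` strictly contained in `Q`. -/
def sChildren (S : Set (Cube N)) (Q : Cube N) : Set (Cube N) :=
  {R | R ∈ S ∧ R.set ⊂ Q.set ∧ ¬∃ R' ∈ S, R.set ⊂ R'.set ∧ R'.set ⊂ Q.set}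

/-- A classical `ε`-sparse family of dyadic cubes: `Σ_{R ∈ ch_S(Q)} |R| ≤ ε |Q|`. -/
def EpsSparse (S : Set (Cube N)) (ε : ℝ) : Prop :=
  (∀ Q ∈ S, Q.IsDyadic) ∧
  ∀ Q ∈ S, ∀ F : Finset (Cube N), ↑F ⊆ sChildren S Q → ∑ R ∈ F, R.vol ≤ ε * Q.vol

/-- A dyadic `λ`-Carleson family: `Σ_{R ∈ S, R ⊆ Q} |R| ≤ λ |Q|` for all `Q ∈ S`. -/
def DyadicCarleson (S : Set (Cube N)) (lam : ℝ) : Prop :=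
  (∀ Q ∈ S, Q.IsDyadic) ∧
  ∀ Q ∈ S, ∀ F : Finset (Cube N), (↑F ⊆ {R | R ∈ S ∧ R.set ⊆ Q.set}) →
    ∑ R ∈ F, R.vol ≤ lam * Q.vol

/-- A simple sparse family: every cube of `S` has at most one `S`-child. -/
def SimpleSparse (S : Set (Cube N)) : Prop :=
  (∀ Q ∈ S, Q.IsDyadic) ∧ ∀ Q ∈ S, (sChildren S Q).Subsingleton

end CBD

end

noncomputable section

namespace CBDProof

open MeasureTheory Set Filter
open scoped ENNReal BigOperators NNReal RealInnerProductSpace Topology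


theorem measurable_realSign : Measurable Real.sign := by
  unfold Real.sign
  refine Measurable.ite (measurableSet_lt measurable_id measurable_const) measurable_const ?_
  exact Measurable.ite (measurableSet_lt measurable_const measurable_id) measurable_const
    measurable_const

theorem abs_realSign_le (t : ℝ) : |Real.sign t| ≤ 1 := by
  rcases Real.sign_apply_eq t with h | h | h <;> rw [h] <;> norm_num

theorem realSign_mul_self (t : ℝ) : Real.sign t * t = |t| := by
  rcases lt_trichotomy t 0 with h | h | h
  · rw [Real.sign_of_neg h, abs_of_neg h]; ring
  · simp [h]
  · rw [Real.sign_of_pos h, abs_of_pos h]; ring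

/-- Decreasing sequences of nonempty bounded closed convex sets in a Hilbert space
have nonempty intersection. -/
theorem nonempty_iInter_of_convex {E : Type*} [NormedAddCommGroup E]
    [InnerProductSpace ℝ E] [CompleteSpace E]
    (C : ℕ → Set E) (hconv : ∀ n, Convex ℝ (C n)) (hcl : ∀ n, IsClosed (C n))
    (hne : ∀ n, (C n).Nonempty) (hdec : ∀ m n, m ≤ n → C n ⊆ C m)
    (R : ℝ) (hbd : ∀ n x, x ∈ C n → ‖x‖ ≤ R) : (⋂ n, C n).Nonempty := by
  have hproj : ∀ n, ∃ v ∈ C n, ‖(0:E) - v‖ = ⨅ w : C n, ‖(0:E) - w‖ := fun n =>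
    exists_norm_eq_iInf_of_complete_convex (hne n) (hcl n).isComplete (hconv n) 0
  choose x hxC hxn using hproj
  set d : ℕ → ℝ := fun n => ⨅ w : C n, ‖(0:E) - w‖ with hd
  have hbdd : ∀ n, BddBelow (Set.range fun w : C n => ‖(0:E) - w‖) := by
    intro n
    exact ⟨0, by rintro t ⟨w, rfl⟩; positivity⟩
  have hxnorm : ∀ n, ‖x n‖ = d n := by
    intro n
    rw [hd]; dsimp only
    rw [← hxn n, zero_sub, norm_neg]
  have hdmono : Monotone d := by
    intro m n hmn
    haveI : Nonempty (C n) := (hne n).to_subtype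
    refine le_ciInf fun w => ?_
    exact ciInf_le_of_le (hbdd m) ⟨w.1, hdec m n hmn w.2⟩ le_rfl
  have hdboundR : ∀ n, d n ≤ R := by
    intro n
    rw [← hxnorm n]
    exact hbd n (x n) (hxC n)
  set L := ⨆ m, d m with hL
  have hdle : ∀ n, d n ≤ L := fun n =>
    le_ciSup ⟨R, by rintro t ⟨m, rfl⟩; exact hdboundR m⟩ n
  have hdL : Filter.Tendsto d Filter.atTop (nhds L) :=
    tendsto_atTop_ciSup hdmono ⟨R, by rintro t ⟨m, rfl⟩; exact hdboundR m⟩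
  have hdnn : ∀ n, 0 ≤ d n := fun n => (hxnorm n) ▸ norm_nonneg _
  have key : ∀ m n, m ≤ n → ‖x m - x n‖ ^ 2 ≤ 2 * (L ^ 2 - d m ^ 2) := by
    intro m n hmn
    have hz : (1/2 : ℝ) • x m + (1/2 : ℝ) • x n ∈ C m :=
      hconv m (hxC m) (hdec m n hmn (hxC n)) (by norm_num) (by norm_num) (by norm_num)
    set z := (1/2 : ℝ) • x m + (1/2 : ℝ) • x n with hzdef
    have hsum : x m + x n = (2:ℝ) • z := by
      rw [hzdef, smul_add, smul_smul, smul_smul]; norm_num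
    have hznorm : d m ≤ ‖z‖ := by
      have hzn : d m ≤ ‖(0:E) - z‖ := ciInf_le (hbdd m) ⟨z, hz⟩
      rwa [zero_sub, norm_neg] at hzn
    have hpar := parallelogram_law_with_norm ℝ (x m) (x n)
    have hsumnorm : ‖x m + x n‖ = 2 * ‖z‖ := by
      rw [hsum, norm_smul, Real.norm_two]
    have h1 : ‖x m - x n‖ ^ 2 = 2 * (d m ^ 2 + d n ^ 2) - (2 * ‖z‖) ^ 2 := by
      have hthis := hpar
      rw [hsumnorm] at hthis
      rw [← hxnorm m, ← hxnorm n]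
      nlinarith [hthis]
    have h2 : (2 * d m) ^ 2 ≤ (2 * ‖z‖) ^ 2 := by
      have h2' : 0 ≤ d m := hdnn m
      nlinarith
    nlinarith [hdle n, hdnn n, hdle m]
  have hcauchy : CauchySeq x := by
    rw [Metric.cauchySeq_iff]
    intro ε hε
    have hL2 : Filter.Tendsto (fun n => d n ^ 2) Filter.atTop (nhds (L ^ 2)) := hdL.pow 2
    have : ∀ᶠ n in Filter.atTop, |d n ^ 2 - L ^ 2| < ε ^ 2 / 2 := by
      have := Metric.tendsto_atTop.mp hL2 (ε ^ 2 / 2) (by positivity)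
      filter_upwards [Filter.eventually_atTop.2 this] with n hn
      simpa [Real.dist_eq] using hn
    obtain ⟨N, hN⟩ := Filter.eventually_atTop.mp this
    refine ⟨N, fun m hm n hn => ?_⟩
    -- wlog m ≤ n
    have main : ∀ a b : ℕ, N ≤ a → N ≤ b → a ≤ b → dist (x a) (x b) < ε := by
      intro a b ha hb hab
      have hk := key a b hab
      have h1 : |d a ^ 2 - L ^ 2| < ε ^ 2 / 2 := hN a ha
      have h2 : d a ^ 2 ≤ L ^ 2 := by nlinarith [hdle a, hdnn a]
      have h3 : ‖x a - x b‖ ^ 2 < ε ^ 2 := by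
        rw [abs_of_nonpos (by linarith)] at h1
        nlinarith
      have := lt_of_pow_lt_pow_left₀ 2 hε.le h3
      rwa [dist_eq_norm]
    rcases le_total m n with h | h
    · exact main m n hm hn h
    · rw [dist_comm]; exact main n m hn hm h
  obtain ⟨y, hy⟩ := cauchySeq_tendsto_of_complete hcauchy
  refine ⟨y, Set.mem_iInter.2 fun n => ?_⟩
  exact (hcl n).mem_of_tendsto hy
    (Filter.eventually_atTop.2 ⟨n, fun k hk => hdec n k hk (hxC k)⟩)


variable {α : Type*} [MeasurableSpace α] {μ : Measure α} {d : ℕ}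

local notation "𝔼" => EuclideanSpace ℝ (Fin d)

/-- The identification of `Fin d → ℝ` with Euclidean space. -/
def toE : (Fin d → ℝ) → 𝔼 := (WithLp.equiv 2 (Fin d → ℝ)).symm

theorem toE_apply (v : Fin d → ℝ) (i : Fin d) : (toE v) i = v i := rfl

theorem measurable_toE : Measurable (toE (d := d)) :=
  WithLp.measurable_toLp 2 (Fin d → ℝ)

theorem measurable_applyE (i : Fin d) : Measurable fun u : 𝔼 => u i :=
  (measurable_pi_apply i).comp (WithLp.measurable_ofLp 2 (Fin d → ℝ))

theorem norm_toE_le {c : ℝ} (hc : 0 ≤ c) (v : Fin d → ℝ) (h : ∀ i, |v i| ≤ c) :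
    ‖toE v‖ ≤ Real.sqrt d * c := by
  rw [EuclideanSpace.norm_eq]
  have h1 : ∑ i, ‖(toE v) i‖ ^ 2 ≤ ∑ _i : Fin d, c ^ 2 := by
    refine Finset.sum_le_sum fun i _ => ?_
    rw [toE_apply, Real.norm_eq_abs]
    exact pow_le_pow_left₀ (abs_nonneg _) (h i) 2
  refine (Real.sqrt_le_sqrt h1).trans ?_
  rw [Finset.sum_const, Finset.card_univ, Fintype.card_fin, nsmul_eq_mul]
  rw [Real.sqrt_mul (by positivity), Real.sqrt_sq hc]

theorem inner_toE (u : 𝔼) (v : Fin d → ℝ) : ⟪u, toE v⟫ = ∑ i, u i * v i := by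
  rw [PiLp.inner_apply]
  exact Finset.sum_congr rfl fun i _ => by rw [toE_apply, RCLike.inner_apply, conj_trivial, mul_comm]

theorem norm_sq_toE_sub (u v : Fin d → ℝ) :
    ‖toE u - toE v‖ ^ 2 = ∑ i, (u i - v i) ^ 2 := by
  rw [EuclideanSpace.norm_eq, Real.sq_sqrt (by positivity)]
  exact Finset.sum_congr rfl fun i _ => by
    rw [PiLp.sub_apply, toE_apply, toE_apply, Real.norm_eq_abs, sq_abs]

section StepA

variable (F : α → Fin d → ℝ) (b : ℝ) (g : α → Fin d → ℝ)

/-- Integrability of products `k·Fᵢ` for `k` bounded measurable. -/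
theorem int_mul_comp (hFm : Measurable F) (hFi : Integrable F μ) {k : α → ℝ}
    (hkm : AEMeasurable k μ) {c : ℝ} (hkb : ∀ᵐ y ∂μ, |k y| ≤ c) (i : Fin d) :
    Integrable (fun y => k y * F y i) μ := by
  refine Integrable.mono' ((hFi.norm).const_mul c) ?_ ?_
  · exact (hkm.mul ((measurable_pi_apply i).comp hFm).aemeasurable).aestronglyMeasurable
  · filter_upwards [hkb] with y hy
    rw [norm_mul, Real.norm_eq_abs, Real.norm_eq_abs]
    have h2 : |F y i| ≤ ‖F y‖ := by
      simpa using norm_le_pi_norm (F y) i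
    have h0 : (0:ℝ) ≤ c := (abs_nonneg _).trans hy
    exact mul_le_mul hy h2 (abs_nonneg _) h0

end StepA

section StepAmain

variable {F : α → Fin d → ℝ} {b : ℝ} {g : α → Fin d → ℝ}

theorem abs_integral_le (hFm : Measurable F) (hFi : Integrable F μ) {k : α → ℝ}
    (hkm : AEMeasurable k μ) {c : ℝ} (hc : 0 ≤ c) (hkb : ∀ᵐ y ∂μ, |k y| ≤ c) (i : Fin d) :
    |∫ y, k y * F y i ∂μ| ≤ c * ∫ y, ‖F y‖ ∂μ := by
  calc |∫ y, k y * F y i ∂μ| ≤ ∫ y, ‖k y * F y i‖ ∂μ := by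
        rw [← Real.norm_eq_abs]; exact norm_integral_le_integral_norm _
    _ ≤ ∫ y, c * ‖F y‖ ∂μ := by
        refine integral_mono_of_nonneg (Eventually.of_forall fun y => norm_nonneg _)
          ((hFi.norm).const_mul c) ?_
        filter_upwards [hkb] with y hy
        rw [norm_mul, Real.norm_eq_abs, Real.norm_eq_abs]
        have h2 : |F y i| ≤ ‖F y‖ := by simpa using norm_le_pi_norm (F y) i
        exact mul_le_mul hy h2 (abs_nonneg _) hc
    _ = c * ∫ y, ‖F y‖ ∂μ := integral_const_mul c _

theorem stepA [IsFiniteMeasure μ] (hFm : Measurable F) (hFi : Integrable F μ)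
    (hb : 0 ≤ b) (hgm : Measurable g)
    (hmem : ∀ᵐ x ∂μ, ∃ φ : α → ℝ, Measurable φ ∧ (∀ y, |φ y| ≤ 1) ∧
        ∀ i, g x i = b * ∫ y, φ y * F y i ∂μ)
    {ε : ℝ} (hε : 0 < ε) :
    ∃ k : α → α → ℝ, Measurable (Function.uncurry k) ∧ (∀ p q, |k p q| ≤ b) ∧
      ∫ x, ∑ i, ((∫ y, k x y * F y i ∂μ) - g x i) ^ 2 ∂μ ≤ ε := by
  classical
  set R₀ : ℝ := b * ∫ y, ‖F y‖ ∂μ with hR₀def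
  have hR₀nn : 0 ≤ R₀ := mul_nonneg hb (integral_nonneg fun y => norm_nonneg _)
  set gE : α → 𝔼 := fun x => toE (g x) with hgEdef
  have hgEm : Measurable gE := measurable_toE.comp hgm
  have hgbd : ∀ᵐ x ∂μ, ∀ i, |g x i| ≤ R₀ := by
    filter_upwards [hmem] with x hx
    obtain ⟨φ, hφm, hφb, hφg⟩ := hx
    intro i
    rw [hφg i, abs_mul, abs_of_nonneg hb]
    refine mul_le_mul_of_nonneg_left ?_ hb
    have := abs_integral_le (μ := μ) hFm hFi hφm.aemeasurable zero_le_one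
      (Eventually.of_forall hφb) i
    simpa using this
  have hgE2 : MemLp gE 2 μ := by
    refine MemLp.of_bound hgEm.aestronglyMeasurable (Real.sqrt d * R₀) ?_
    filter_upwards [hgbd] with x hx
    exact norm_toE_le hR₀nn (g x) hx
  set g' : Lp 𝔼 2 μ := hgE2.toLp gE with hg'def
  -- the set of kernel averages
  set S₀ : Set (Lp 𝔼 2 μ) := {G | ∃ k : α → α → ℝ, Measurable (Function.uncurry k) ∧
      (∀ p q, |k p q| ≤ b) ∧
      ⇑G =ᵐ[μ] fun x => toE fun i => ∫ y, k x y * F y i ∂μ} with hS₀def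
  have h0S₀ : (0 : Lp 𝔼 2 μ) ∈ S₀ := by
    refine ⟨fun _ _ => 0, measurable_const, fun p q => by simpa using hb, ?_⟩
    filter_upwards [Lp.coeFn_zero 𝔼 2 μ] with x hx
    rw [hx]
    have : (fun i : Fin d => ∫ y, (0:ℝ) * F y i ∂μ) = fun _ => (0:ℝ) := by
      funext i; simp
    rw [this]
    rfl
  have hconv : Convex ℝ S₀ := by
    rintro G₁ ⟨k₁, hk₁m, hk₁b, hk₁r⟩ G₂ ⟨k₂, hk₂m, hk₂b, hk₂r⟩ a c ha hc hac
    refine ⟨fun p q => a * k₁ p q + c * k₂ p q, ?_, ?_, ?_⟩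
    · exact (hk₁m.const_mul a).add (hk₂m.const_mul c)
    · intro p q
      calc |a * k₁ p q + c * k₂ p q| ≤ |a * k₁ p q| + |c * k₂ p q| := abs_add_le _ _
        _ ≤ a * b + c * b := by
            refine add_le_add ?_ ?_
            · rw [abs_mul, abs_of_nonneg ha]
              exact mul_le_mul_of_nonneg_left (hk₁b p q) ha
            · rw [abs_mul, abs_of_nonneg hc]
              exact mul_le_mul_of_nonneg_left (hk₂b p q) hc
        _ = b := by rw [← add_mul, hac, one_mul]
    · filter_upwards [Lp.coeFn_add (a • G₁) (c • G₂), Lp.coeFn_smul a G₁,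
        Lp.coeFn_smul c G₂, hk₁r, hk₂r] with x hadd hs1 hs2 h1 h2
      have hint : ∀ i, ∫ y, (a * k₁ x y + c * k₂ x y) * F y i ∂μ
          = a * ∫ y, k₁ x y * F y i ∂μ + c * ∫ y, k₂ x y * F y i ∂μ := by
        intro i
        have e : (fun y => (a * k₁ x y + c * k₂ x y) * F y i)
            = fun y => a * (k₁ x y * F y i) + c * (k₂ x y * F y i) := by
          funext y; ring
        rw [e, integral_add
          ((int_mul_comp F hFm hFi hk₁m.of_uncurry_left.aemeasurable
            (Eventually.of_forall fun y => hk₁b x y) i).const_mul a)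
          ((int_mul_comp F hFm hFi hk₂m.of_uncurry_left.aemeasurable
            (Eventually.of_forall fun y => hk₂b x y) i).const_mul c),
          integral_const_mul, integral_const_mul]
      rw [hadd, Pi.add_apply, hs1, hs2, Pi.smul_apply, Pi.smul_apply, h1, h2]
      refine PiLp.ext fun i => ?_
      rw [PiLp.add_apply, PiLp.smul_apply, PiLp.smul_apply, toE_apply, toE_apply, toE_apply,
        smul_eq_mul, smul_eq_mul, hint i]
  obtain ⟨p, hpS, hproj⟩ := exists_norm_eq_iInf_of_complete_convex
    ⟨0, subset_closure h0S₀⟩ isClosed_closure.isComplete hconv.closure g'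
  have hchar := (norm_eq_iInf_iff_real_inner_le_zero hconv.closure hpS).mp hproj
  set h : Lp 𝔼 2 μ := g' - p with hhdef
  have hhsm := Lp.aestronglyMeasurable h
  set hrep : α → 𝔼 := hhsm.mk ⇑h with hrepdef
  have hrepm : StronglyMeasurable hrep := hhsm.stronglyMeasurable_mk
  have hrepae : ⇑h =ᵐ[μ] hrep := hhsm.ae_eq_mk
  have hrci : ∀ i, Measurable fun x => hrep x i := fun i =>
    (measurable_applyE i).comp hrepm.measurable
  set cc : α → α → ℝ := fun x y => ∑ i, hrep x i * F y i with hccdef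
  have hcm : Measurable (Function.uncurry cc) := by
    refine Finset.measurable_sum _ fun i _ => ?_
    exact ((hrci i).comp measurable_fst).mul
      (((measurable_pi_apply i).comp hFm).comp measurable_snd)
  have hcxm : ∀ x, Measurable (cc x) := fun x => hcm.of_uncurry_left
  have hcxbd : ∀ x y, |cc x y| ≤ (∑ i, |hrep x i|) * ‖F y‖ := by
    intro x y
    refine (Finset.abs_sum_le_sum_abs _ _).trans ?_
    rw [Finset.sum_mul]
    refine Finset.sum_le_sum fun i _ => ?_
    rw [abs_mul]
    refine mul_le_mul_of_nonneg_left ?_ (abs_nonneg _)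
    simpa using norm_le_pi_norm (F y) i
  have hcabsint : ∀ x, Integrable (fun y => |cc x y|) μ := by
    intro x
    refine Integrable.mono' ((hFi.norm).const_mul (∑ i, |hrep x i|)) ?_ ?_
    · exact (hcxm x).abs.aestronglyMeasurable
    · exact Eventually.of_forall fun y => by
        rw [Real.norm_eq_abs, abs_abs]; exact hcxbd x y
  set Kh : α → α → ℝ := fun x y => b * Real.sign (cc x y) with hKhdef
  have hKhm : Measurable (Function.uncurry Kh) := (measurable_realSign.comp hcm).const_mul b
  have hKhb : ∀ p q, |Kh p q| ≤ b := by
    intro p q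
    rw [abs_mul, abs_of_nonneg hb]
    calc b * |Real.sign (cc p q)| ≤ b * 1 :=
          mul_le_mul_of_nonneg_left (abs_realSign_le _) hb
      _ = b := mul_one b
  set AKh : α → Fin d → ℝ := fun x i => ∫ y, Kh x y * F y i ∂μ with hAKhdef
  have hAKhmi : ∀ i, Measurable fun x => AKh x i := by
    intro i
    have : Measurable fun z : α × α => Kh z.1 z.2 * F z.2 i :=
      hKhm.mul (((measurable_pi_apply i).comp hFm).comp measurable_snd)
    exact this.stronglyMeasurable.integral_prod_right'.measurable
  have hAKhbd : ∀ x i, |AKh x i| ≤ R₀ :=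
    fun x i => abs_integral_le hFm hFi (hKhm.of_uncurry_left).aemeasurable hb
      (Eventually.of_forall fun y => hKhb x y) i
  set AKhE : α → 𝔼 := fun x => toE (AKh x) with hAKhEdef
  have hAKhE2 : MemLp AKhE 2 μ := by
    refine MemLp.of_bound (measurable_toE.comp
      (measurable_pi_lambda _ hAKhmi)).aestronglyMeasurable (Real.sqrt d * R₀) ?_
    exact Eventually.of_forall fun x => norm_toE_le hR₀nn (AKh x) (hAKhbd x)
  set P : Lp 𝔼 2 μ := hAKhE2.toLp AKhE with hPdef
  have hPS₀ : P ∈ S₀ := ⟨Kh, hKhm, hKhb, hAKhE2.coeFn_toLp⟩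
  -- pointwise identity for the extremal kernel
  have key1 : ∀ x, ⟪hrep x, AKhE x⟫ = b * ∫ y, |cc x y| ∂μ := by
    intro x
    rw [hAKhEdef]
    rw [inner_toE]
    calc ∑ i, hrep x i * AKh x i
        = ∑ i, ∫ y, hrep x i * (Kh x y * F y i) ∂μ := by
          refine Finset.sum_congr rfl fun i _ => ?_
          rw [hAKhdef, integral_const_mul]
      _ = ∫ y, ∑ i, hrep x i * (Kh x y * F y i) ∂μ := by
          refine (integral_finset_sum _ fun i _ => ?_).symm
          exact (int_mul_comp F hFm hFi (hKhm.of_uncurry_left).aemeasurable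
            (Eventually.of_forall fun y => hKhb x y) i).const_mul _
      _ = ∫ y, b * (Real.sign (cc x y) * cc x y) ∂μ := by
          refine integral_congr_ae (Eventually.of_forall fun y => ?_)
          rw [hccdef]
          simp only [Finset.mul_sum]
          exact Finset.sum_congr rfl fun i _ => by rw [hKhdef]; ring
      _ = ∫ y, b * |cc x y| ∂μ := by
          exact integral_congr_ae (Eventually.of_forall fun y => by
            simp only [realSign_mul_self])
      _ = b * ∫ y, |cc x y| ∂μ := integral_const_mul b _
  -- pointwise inequality from the membership hypothesis
  have key2 : ∀ᵐ x ∂μ, ⟪hrep x, gE x⟫ ≤ b * ∫ y, |cc x y| ∂μ := by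
    filter_upwards [hmem] with x hx
    obtain ⟨φ, hφm, hφb, hφg⟩ := hx
    rw [hgEdef]
    rw [inner_toE]
    have e1 : ∑ i, hrep x i * g x i = b * ∫ y, φ y * cc x y ∂μ := by
      calc ∑ i, hrep x i * g x i
          = ∑ i, ∫ y, hrep x i * (b * (φ y * F y i)) ∂μ := by
            refine Finset.sum_congr rfl fun i _ => ?_
            rw [hφg i, ← integral_const_mul b, ← integral_const_mul (hrep x i)]
        _ = ∫ y, ∑ i, hrep x i * (b * (φ y * F y i)) ∂μ := by
            refine (integral_finset_sum _ fun i _ => ?_).symm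
            exact ((int_mul_comp F hFm hFi hφm.aemeasurable
              (Eventually.of_forall hφb) i).const_mul b).const_mul _
        _ = ∫ y, b * (φ y * cc x y) ∂μ := by
            refine integral_congr_ae (Eventually.of_forall fun y => ?_)
            rw [hccdef]
            simp only [Finset.mul_sum]
            exact Finset.sum_congr rfl fun i _ => by ring
        _ = b * ∫ y, φ y * cc x y ∂μ := integral_const_mul b _
    rw [e1]
    refine mul_le_mul_of_nonneg_left ?_ hb
    refine integral_mono ?_ (hcabsint x) ?_
    · refine Integrable.mono' (hcabsint x) ?_ ?_
      · exact (hφm.mul (hcxm x)).aestronglyMeasurable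
      · refine Eventually.of_forall fun y => ?_
        rw [Real.norm_eq_abs, abs_mul]
        calc |φ y| * |cc x y| ≤ 1 * |cc x y| :=
              mul_le_mul_of_nonneg_right (hφb y) (abs_nonneg _)
          _ = |cc x y| := one_mul _
    · intro y
      calc φ y * cc x y ≤ |φ y * cc x y| := le_abs_self _
        _ = |φ y| * |cc x y| := abs_mul _ _
        _ ≤ 1 * |cc x y| := mul_le_mul_of_nonneg_right (hφb y) (abs_nonneg _)
        _ = |cc x y| := one_mul _
  -- comparison of inner products
  have hineq : ⟪h, g'⟫ ≤ ⟪h, P⟫ := by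
    rw [L2.inner_def, L2.inner_def]
    refine integral_mono_ae (L2.integrable_inner h g') (L2.integrable_inner h P) ?_
    filter_upwards [hrepae, hgE2.coeFn_toLp, hAKhE2.coeFn_toLp, key2] with x e1 e2 e3 e4
    rw [e1, e2, e3]
    exact e4.trans_eq (key1 x).symm
  have h5 : ⟪h, P - p⟫ ≤ (0:ℝ) := hchar P (subset_closure hPS₀)
  rw [inner_sub_right] at h5
  have h7 : ‖h‖ ^ 2 = ⟪h, g'⟫ - ⟪h, p⟫ := by
    rw [← real_inner_self_eq_norm_sq, ← inner_sub_right, hhdef]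
  have h8 : h = 0 := by
    have hle : ‖h‖ ^ 2 ≤ 0 := by
      calc ‖h‖ ^ 2 = ⟪h, g'⟫ - ⟪h, p⟫ := h7
        _ ≤ ⟪h, P⟫ - ⟪h, p⟫ := sub_le_sub_right hineq _
        _ ≤ 0 := h5
    have heq : ‖h‖ ^ 2 = 0 := le_antisymm hle (sq_nonneg _)
    exact norm_eq_zero.mp (sq_eq_zero_iff.mp heq)
  have hg'S : g' ∈ closure S₀ := by
    have : g' = p := by
      have := sub_eq_zero.mp h8
      exact this
    rw [this]; exact hpS
  obtain ⟨G, hGS₀, hGdist⟩ := Metric.mem_closure_iff.mp hg'S (Real.sqrt ε)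
    (Real.sqrt_pos.mpr hε)
  obtain ⟨k, hkm, hkb, hkr⟩ := hGS₀
  refine ⟨k, hkm, hkb, ?_⟩
  have e2 : dist g' G ^ 2 = ∫ x, ∑ i, ((∫ y, k x y * F y i ∂μ) - g x i) ^ 2 ∂μ := by
    rw [dist_eq_norm, ← real_inner_self_eq_norm_sq, L2.inner_def]
    refine integral_congr_ae ?_
    filter_upwards [Lp.coeFn_sub g' G, hgE2.coeFn_toLp, hkr] with x e1 e2' e3
    rw [e1, Pi.sub_apply, e2', e3, real_inner_self_eq_norm_sq, norm_sq_toE_sub]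
    exact Finset.sum_congr rfl fun i _ => by ring
  have e3 : dist g' G ^ 2 < ε := by
    nlinarith [Real.sq_sqrt hε.le, dist_nonneg (x := g') (y := G), hGdist]
  linarith [e2 ▸ e3]

end StepAmain

section StepB

variable {F : α → Fin d → ℝ} {b : ℝ} {g : α → Fin d → ℝ}

/-- The quadratic defect functional is invariant under a.e. modification of the kernel. -/
theorem val_congr [IsFiniteMeasure μ] {k₁ k₂ : α × α → ℝ}
    (h : k₁ =ᵐ[μ.prod μ] k₂) :
    ∫ x, ∑ i, ((∫ y, k₁ (x, y) * F y i ∂μ) - g x i) ^ 2 ∂μ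
      = ∫ x, ∑ i, ((∫ y, k₂ (x, y) * F y i ∂μ) - g x i) ^ 2 ∂μ := by
  refine integral_congr_ae ?_
  filter_upwards [Measure.ae_ae_of_ae_prod h] with x hx
  refine Finset.sum_congr rfl fun i _ => ?_
  have : (∫ y, k₁ (x, y) * F y i ∂μ) = ∫ y, k₂ (x, y) * F y i ∂μ :=
    integral_congr_ae (hx.mono fun y hy => by simp only [hy])
  rw [this]

theorem val_meas [SFinite μ] (hFm : Measurable F) (hgm : Measurable g) {k : α × α → ℝ}
    (hk : Measurable k) :
    Measurable fun x => ∑ i, ((∫ y, k (x, y) * F y i ∂μ) - g x i) ^ 2 := by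
  refine Finset.measurable_sum _ fun i _ => ?_
  refine Measurable.pow_const (Measurable.sub ?_ ((measurable_pi_apply i).comp hgm)) 2
  exact (hk.mul (((measurable_pi_apply i).comp hFm).comp
    measurable_snd)).stronglyMeasurable.integral_prod_right'.measurable

set_option synthInstance.maxHeartbeats 1000000 in
set_option maxHeartbeats 2000000 in
/-- **Abstract selection lemma.** -/
theorem abstract_selection [IsFiniteMeasure μ] (hFm : Measurable F) (hFi : Integrable F μ)
    (hb : 0 ≤ b) (hgm : Measurable g)
    (hmem : ∀ᵐ x ∂μ, ∃ φ : α → ℝ, Measurable φ ∧ (∀ y, |φ y| ≤ 1) ∧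
        ∀ i, g x i = b * ∫ y, φ y * F y i ∂μ) :
    ∃ K : α → α → ℝ, Measurable (Function.uncurry K) ∧ (∀ x y, |K x y| ≤ b) ∧
      ∀ᵐ x ∂μ, ∀ i, g x i = ∫ y, K x y * F y i ∂μ := by
  classical
  set ν := μ.prod μ with hνdef
  set R₀ : ℝ := b * ∫ y, ‖F y‖ ∂μ with hR₀def
  have hR₀nn : 0 ≤ R₀ := mul_nonneg hb (integral_nonneg fun y => norm_nonneg _)
  have hgbd : ∀ᵐ x ∂μ, ∀ i, |g x i| ≤ R₀ := by
    filter_upwards [hmem] with x hx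
    obtain ⟨φ, hφm, hφb, hφg⟩ := hx
    intro i
    rw [hφg i, abs_mul, abs_of_nonneg hb]
    refine mul_le_mul_of_nonneg_left ?_ hb
    simpa using abs_integral_le (μ := μ) hFm hFi hφm.aemeasurable zero_le_one
      (Eventually.of_forall hφb) i
  -- the constant bounding the outer integrand
  set CB : ℝ := (d : ℝ) * (R₀ + R₀) ^ 2 with hCBdef
  -- a.e. bound on outer integrand, for kernels with a.e. bound b
  have houter : ∀ k : α × α → ℝ, Measurable k → (∀ᵐ z ∂ν, |k z| ≤ b) →
      (∀ᵐ x ∂μ, |∑ i, ((∫ y, k (x, y) * F y i ∂μ) - g x i) ^ 2| ≤ CB)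
        ∧ Integrable (fun x => ∑ i, ((∫ y, k (x, y) * F y i ∂μ) - g x i) ^ 2) μ := by
    intro k hkm hkb
    have hbd : ∀ᵐ x ∂μ, |∑ i, ((∫ y, k (x, y) * F y i ∂μ) - g x i) ^ 2| ≤ CB := by
      filter_upwards [Measure.ae_ae_of_ae_prod hkb, hgbd] with x hx hgx
      have h1 : ∀ i, |(∫ y, k (x, y) * F y i ∂μ) - g x i| ≤ R₀ + R₀ := by
        intro i
        refine (abs_sub _ _).trans (add_le_add ?_ (hgx i))
        exact abs_integral_le hFm hFi (hkm.comp (measurable_prodMk_left)).aemeasurable hb hx i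
      rw [abs_of_nonneg (Finset.sum_nonneg fun i _ => sq_nonneg _)]
      calc ∑ i, ((∫ y, k (x, y) * F y i ∂μ) - g x i) ^ 2
          ≤ ∑ _i : Fin d, (R₀ + R₀) ^ 2 := by
            refine Finset.sum_le_sum fun i _ => ?_
            rw [← sq_abs]
            exact pow_le_pow_left₀ (abs_nonneg _) (h1 i) 2
        _ = CB := by rw [Finset.sum_const, Finset.card_univ, Fintype.card_fin, nsmul_eq_mul]
    refine ⟨hbd, ?_⟩
    refine Integrable.mono' (integrable_const CB) (val_meas hFm hgm hkm).aestronglyMeasurable ?_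
    filter_upwards [hbd] with x hx
    rwa [Real.norm_eq_abs]
  -- canonical representatives
  set Rep : Lp ℝ 2 ν → α × α → ℝ := fun K => (Lp.aestronglyMeasurable K).mk ⇑K with hRepdef
  have hRepm : ∀ K : Lp ℝ 2 ν, Measurable (Rep K) :=
    fun K => (Lp.aestronglyMeasurable K).stronglyMeasurable_mk.measurable
  have hRepae : ∀ K : Lp ℝ 2 ν, ⇑K =ᵐ[ν] Rep K :=
    fun K => (Lp.aestronglyMeasurable K).ae_eq_mk
  set val : (α × α → ℝ) → ℝ :=
    fun k => ∫ x, ∑ i, ((∫ y, k (x, y) * F y i ∂μ) - g x i) ^ 2 ∂μ with hvaldef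
  set C : ℕ → Set (Lp ℝ 2 ν) := fun n =>
    {K | (∀ᵐ z ∂ν, |⇑K z| ≤ b) ∧ val (Rep K) ≤ ((n : ℝ) + 1)⁻¹} with hCdef
  -- convexity
  have hconv : ∀ n, Convex ℝ (C n) := by
    intro n
    rintro K₁ ⟨hK₁b, hK₁v⟩ K₂ ⟨hK₂b, hK₂v⟩ a c ha hc hac
    have hcomb : ⇑(a • K₁ + c • K₂) =ᵐ[ν]
        fun z => a * Rep K₁ z + c * Rep K₂ z := by
      filter_upwards [Lp.coeFn_add (a • K₁) (c • K₂), Lp.coeFn_smul a K₁,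
        Lp.coeFn_smul c K₂, hRepae K₁, hRepae K₂] with z e1 e2 e3 e4 e5
      rw [e1, Pi.add_apply, e2, e3, Pi.smul_apply, Pi.smul_apply, smul_eq_mul, smul_eq_mul,
        e4, e5]
    have hbound : ∀ᵐ z ∂ν, |⇑(a • K₁ + c • K₂) z| ≤ b := by
      filter_upwards [hcomb, hK₁b, hK₂b, hRepae K₁, hRepae K₂] with z e1 h1 h2 e4 e5
      rw [e1]
      calc |a * Rep K₁ z + c * Rep K₂ z| ≤ |a * Rep K₁ z| + |c * Rep K₂ z| := abs_add_le _ _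
        _ ≤ a * b + c * b := by
            refine add_le_add ?_ ?_
            · rw [abs_mul, abs_of_nonneg ha]
              exact mul_le_mul_of_nonneg_left (by rw [← e4]; exact h1) ha
            · rw [abs_mul, abs_of_nonneg hc]
              exact mul_le_mul_of_nonneg_left (by rw [← e5]; exact h2) hc
        _ = b := by rw [← add_mul, hac, one_mul]
    refine ⟨hbound, ?_⟩
    have hRb₁ : ∀ᵐ z ∂ν, |Rep K₁ z| ≤ b := by
      filter_upwards [hK₁b, hRepae K₁] with z h1 h2; rwa [← h2]
    have hRb₂ : ∀ᵐ z ∂ν, |Rep K₂ z| ≤ b := by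
      filter_upwards [hK₂b, hRepae K₂] with z h1 h2; rwa [← h2]
    have e0 : val (Rep (a • K₁ + c • K₂)) = val (fun z => a * Rep K₁ z + c * Rep K₂ z) :=
      val_congr ((hRepae _).symm.trans hcomb)
    rw [e0]
    have hint₁ := (houter (Rep K₁) (hRepm K₁) hRb₁).2
    have hint₂ := (houter (Rep K₂) (hRepm K₂) hRb₂).2
    have hptwise : ∀ᵐ x ∂μ,
        ∑ i, ((∫ y, (a * Rep K₁ (x, y) + c * Rep K₂ (x, y)) * F y i ∂μ) - g x i) ^ 2
        ≤ a * (∑ i, ((∫ y, Rep K₁ (x, y) * F y i ∂μ) - g x i) ^ 2)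
          + c * (∑ i, ((∫ y, Rep K₂ (x, y) * F y i ∂μ) - g x i) ^ 2) := by
      filter_upwards [Measure.ae_ae_of_ae_prod hRb₁, Measure.ae_ae_of_ae_prod hRb₂]
        with x h1 h2
      have hint : ∀ i, ∫ y, (a * Rep K₁ (x, y) + c * Rep K₂ (x, y)) * F y i ∂μ
          = a * ∫ y, Rep K₁ (x, y) * F y i ∂μ + c * ∫ y, Rep K₂ (x, y) * F y i ∂μ := by
        intro i
        have e : (fun y => (a * Rep K₁ (x, y) + c * Rep K₂ (x, y)) * F y i)
            = fun y => a * (Rep K₁ (x, y) * F y i) + c * (Rep K₂ (x, y) * F y i) := by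
          funext y; ring
        rw [e, integral_add
          ((int_mul_comp F hFm hFi (show Measurable fun y => Rep K₁ (x, y) from
            (hRepm K₁).comp measurable_prodMk_left).aemeasurable h1 i).const_mul a)
          ((int_mul_comp F hFm hFi (show Measurable fun y => Rep K₂ (x, y) from
            (hRepm K₂).comp measurable_prodMk_left).aemeasurable h2 i).const_mul c),
          integral_const_mul, integral_const_mul]
      rw [Finset.mul_sum, Finset.mul_sum, ← Finset.sum_add_distrib]
      refine Finset.sum_le_sum fun i _ => ?_
      rw [hint i]
      set u : ℝ := (∫ y, Rep K₁ (x, y) * F y i ∂μ) - g x i with hu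
      set v : ℝ := (∫ y, Rep K₂ (x, y) * F y i ∂μ) - g x i with hv
      have e2 : a * (∫ y, Rep K₁ (x, y) * F y i ∂μ)
          + c * (∫ y, Rep K₂ (x, y) * F y i ∂μ) - g x i = a * u + c * v := by
        rw [hu, hv]; linear_combination (g x i) * hac
      rw [e2]
      nlinarith [sq_nonneg (u - v), mul_nonneg ha hc]
    have hle : val (fun z => a * Rep K₁ z + c * Rep K₂ z)
        ≤ a * val (Rep K₁) + c * val (Rep K₂) := by
      calc val (fun z => a * Rep K₁ z + c * Rep K₂ z)
          ≤ ∫ x, (a * (∑ i, ((∫ y, Rep K₁ (x, y) * F y i ∂μ) - g x i) ^ 2)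
            + c * (∑ i, ((∫ y, Rep K₂ (x, y) * F y i ∂μ) - g x i) ^ 2)) ∂μ := by
            refine integral_mono_of_nonneg ?_ ((hint₁.const_mul a).add (hint₂.const_mul c)) ?_
            · exact Eventually.of_forall fun x => Finset.sum_nonneg fun i _ => sq_nonneg _
            · exact hptwise
        _ = a * val (Rep K₁) + c * val (Rep K₂) := by
            rw [integral_add (hint₁.const_mul a) (hint₂.const_mul c), integral_const_mul,
              integral_const_mul]
    calc val (fun z => a * Rep K₁ z + c * Rep K₂ z)
        ≤ a * val (Rep K₁) + c * val (Rep K₂) := hle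
      _ ≤ a * ((n : ℝ) + 1)⁻¹ + c * ((n : ℝ) + 1)⁻¹ :=
          add_le_add (mul_le_mul_of_nonneg_left hK₁v ha)
            (mul_le_mul_of_nonneg_left hK₂v hc)
      _ = ((n : ℝ) + 1)⁻¹ := by rw [← add_mul, hac, one_mul]
  -- closedness
  have hcl : ∀ n, IsClosed (C n) := by
    intro n
    refine IsSeqClosed.isClosed ?_
    intro Ks K hKs hlim
    have hsn : Tendsto (fun j => eLpNorm (⇑(Ks j) - ⇑K) 2 ν) atTop (𝓝 0) :=
      (Lp.tendsto_Lp_iff_tendsto_eLpNorm' Ks K).mp hlim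
    have htm : TendstoInMeasure ν (fun j => ⇑(Ks j)) atTop ⇑K :=
      tendstoInMeasure_of_tendsto_eLpNorm (by norm_num)
        (fun j => Lp.aestronglyMeasurable _) (Lp.aestronglyMeasurable _) hsn
    obtain ⟨ns, hnsmono, hae⟩ := htm.exists_seq_tendsto_ae
    have hballK : ∀ᵐ z ∂ν, |⇑K z| ≤ b := by
      have hall : ∀ᵐ z ∂ν, ∀ j, |⇑(Ks (ns j)) z| ≤ b :=
        ae_all_iff.mpr fun j => (hKs (ns j)).1
      filter_upwards [hae, hall] with z hz hb'
      exact le_of_tendsto hz.abs (Eventually.of_forall hb')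
    refine ⟨hballK, ?_⟩
    have hRbK : ∀ᵐ z ∂ν, |Rep K z| ≤ b := by
      filter_upwards [hballK, hRepae K] with z h1 h2; rwa [← h2]
    have hRbj : ∀ j, ∀ᵐ z ∂ν, |Rep (Ks (ns j)) z| ≤ b := fun j => by
      filter_upwards [(hKs (ns j)).1, hRepae (Ks (ns j))] with z h1 h2; rwa [← h2]
    have haeR : ∀ᵐ z ∂ν, Tendsto (fun j => Rep (Ks (ns j)) z) atTop (𝓝 (Rep K z)) := by
      have hall : ∀ᵐ z ∂ν, ∀ j, ⇑(Ks (ns j)) z = Rep (Ks (ns j)) z :=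
        ae_all_iff.mpr fun j => hRepae (Ks (ns j))
      filter_upwards [hae, hall, hRepae K] with z hz h1 h2
      rw [← h2]
      exact hz.congr h1
    have hx_main : ∀ᵐ x ∂μ, Tendsto
        (fun j => ∑ i, ((∫ y, Rep (Ks (ns j)) (x, y) * F y i ∂μ) - g x i) ^ 2) atTop
        (𝓝 (∑ i, ((∫ y, Rep K (x, y) * F y i ∂μ) - g x i) ^ 2)) := by
      have h1 : ∀ᵐ x ∂μ, ∀ j, ∀ᵐ y ∂μ, |Rep (Ks (ns j)) (x, y)| ≤ b :=
        ae_all_iff.mpr fun j => Measure.ae_ae_of_ae_prod (hRbj j)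
      have h2 : ∀ᵐ x ∂μ, ∀ᵐ y ∂μ,
          Tendsto (fun j => Rep (Ks (ns j)) (x, y)) atTop (𝓝 (Rep K (x, y))) :=
        Measure.ae_ae_of_ae_prod haeR
      filter_upwards [h1, h2] with x hx1 hx2
      have hi : ∀ i, Tendsto (fun j => ∫ y, Rep (Ks (ns j)) (x, y) * F y i ∂μ) atTop
          (𝓝 (∫ y, Rep K (x, y) * F y i ∂μ)) := by
        intro i
        refine tendsto_integral_of_dominated_convergence (fun y => b * ‖F y‖) ?_ ?_ ?_ ?_
        · intro j
          exact ((show Measurable fun y => Rep (Ks (ns j)) (x, y) from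
            (hRepm _).comp measurable_prodMk_left).mul
            ((measurable_pi_apply i).comp hFm)).aestronglyMeasurable
        · exact (hFi.norm).const_mul b
        · intro j
          filter_upwards [hx1 j] with y hy
          rw [Real.norm_eq_abs, abs_mul]
          exact mul_le_mul hy (by simpa using norm_le_pi_norm (F y) i) (abs_nonneg _) hb
        · filter_upwards [hx2] with y hy
          exact hy.mul_const _
      refine tendsto_finset_sum _ fun i _ => ?_
      exact (((hi i).sub tendsto_const_nhds).pow 2)
    have hlimval : Tendsto (fun j => val (Rep (Ks (ns j)))) atTop (𝓝 (val (Rep K))) := by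
      refine tendsto_integral_of_dominated_convergence (fun _ => CB) ?_ ?_ ?_ ?_
      · intro j; exact (val_meas hFm hgm (hRepm _)).aestronglyMeasurable
      · exact integrable_const CB
      · intro j
        filter_upwards [(houter _ (hRepm (Ks (ns j))) (hRbj j)).1] with x hx
        rwa [Real.norm_eq_abs]
      · exact hx_main
    exact le_of_tendsto hlimval (Eventually.of_forall fun j => (hKs (ns j)).2)
  -- nonemptiness from the approximation step
  have hne : ∀ n, (C n).Nonempty := by
    intro n
    obtain ⟨k, hkm, hkb, hkval⟩ := stepA hFm hFi hb hgm hmem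
      (ε := ((n : ℝ) + 1)⁻¹) (by positivity)
    have hm2 : MemLp (fun z : α × α => k z.1 z.2) 2 ν := by
      refine MemLp.of_bound hkm.aestronglyMeasurable b ?_
      exact Eventually.of_forall fun z => by rw [Real.norm_eq_abs]; exact hkb z.1 z.2
    refine ⟨hm2.toLp _, ?_, ?_⟩
    · filter_upwards [hm2.coeFn_toLp] with z hz
      rw [hz]
      exact hkb z.1 z.2
    · have he : Rep (hm2.toLp _) =ᵐ[ν] fun z : α × α => k z.1 z.2 :=
        (hRepae _).symm.trans hm2.coeFn_toLp
      calc val (Rep (hm2.toLp _)) = val (fun z : α × α => k z.1 z.2) := val_congr he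
        _ ≤ ((n : ℝ) + 1)⁻¹ := hkval
  -- decreasing
  have hdecr : ∀ m n, m ≤ n → C n ⊆ C m := by
    intro m n hmn K hK
    refine ⟨hK.1, hK.2.trans ?_⟩
    refine inv_anti₀ (by positivity) ?_
    have : (m : ℝ) ≤ (n : ℝ) := Nat.cast_le.mpr hmn
    linarith
  -- boundedness
  have hbdd : ∀ n, ∀ K, K ∈ C n →
      ‖K‖ ≤ (measureUnivNNReal ν : ℝ) ^ ((2 : ℝ≥0∞).toReal)⁻¹ * b := by
    intro n K hK
    refine Lp.norm_le_of_ae_bound hb ?_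
    filter_upwards [hK.1] with z hz
    rwa [Real.norm_eq_abs]
  -- intersect
  obtain ⟨Kinf, hKinf⟩ := nonempty_iInter_of_convex C hconv hcl hne hdecr _ hbdd
  simp only [Set.mem_iInter] at hKinf
  have hKinfb : ∀ᵐ z ∂ν, |⇑Kinf z| ≤ b := (hKinf 0).1
  have hRbinf : ∀ᵐ z ∂ν, |Rep Kinf z| ≤ b := by
    filter_upwards [hKinfb, hRepae Kinf] with z h1 h2; rwa [← h2]
  have hvv : val (Rep Kinf) ≤ 0 := by
    have htnd : Tendsto (fun n : ℕ => ((n : ℝ) + 1)⁻¹) atTop (𝓝 0) := by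
      have := tendsto_one_div_add_atTop_nhds_zero_nat (𝕜 := ℝ)
      simpa [one_div] using this
    exact ge_of_tendsto' htnd fun n => (hKinf n).2
  have hvnn : 0 ≤ val (Rep Kinf) :=
    integral_nonneg fun x => Finset.sum_nonneg fun i _ => sq_nonneg _
  have hv0 : val (Rep Kinf) = 0 := le_antisymm hvv hvnn
  have hintinf := (houter (Rep Kinf) (hRepm Kinf) hRbinf).2
  have hae0 : ∀ᵐ x ∂μ, ∑ i, ((∫ y, Rep Kinf (x, y) * F y i ∂μ) - g x i) ^ 2 = 0 := by
    have h := (integral_eq_zero_iff_of_nonneg_ae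
      (Eventually.of_forall fun x => Finset.sum_nonneg fun i _ => sq_nonneg _) hintinf).mp hv0
    filter_upwards [h] with x hx
    exact hx
  have haeeq : ∀ᵐ x ∂μ, ∀ i, (∫ y, Rep Kinf (x, y) * F y i ∂μ) = g x i := by
    filter_upwards [hae0] with x hx i
    have h := (Finset.sum_eq_zero_iff_of_nonneg (fun i _ => sq_nonneg _)).mp hx i
      (Finset.mem_univ i)
    exact sub_eq_zero.mp (sq_eq_zero_iff.mp h)
  -- final kernel via clamping
  refine ⟨fun x y => max (-b) (min b (Rep Kinf (x, y))), ?_, ?_, ?_⟩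
  · exact measurable_const.max (measurable_const.min (hRepm Kinf))
  · intro x y
    rw [abs_le]
    constructor
    · exact le_max_left _ _
    · exact max_le (by linarith) (min_le_left _ _)
  · have hclamp : ∀ᵐ z ∂ν, max (-b) (min b (Rep Kinf z)) = Rep Kinf z := by
      filter_upwards [hRbinf] with z hz
      rw [abs_le] at hz
      rw [min_eq_right hz.2, max_eq_right hz.1]
    have hfin : ∀ᵐ x ∂μ, ∀ᵐ y ∂μ, max (-b) (min b (Rep Kinf (x, y))) = Rep Kinf (x, y) :=
      Measure.ae_ae_of_ae_prod hclamp
    filter_upwards [haeeq, hfin] with x h1 h2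
    intro i
    rw [← h1 i]
    exact (integral_congr_ae (h2.mono fun y hy => by simp only [hy])).symm

end StepB

end CBDProof

end

namespace CBD

/-- A measurable selection of `⟨⟨f⟩⟩_Q` is given by an integral
kernel `K` on `Q × Q` with `‖K‖_∞ ≤ |Q|⁻¹`. -/
theorem cbAvg_selection_kernel
    (N d : ℕ) (Q : Cube N) (f : (Fin N → ℝ) → Fin d → ℝ)
    (hf : IntegrableOn f Q.set volume)
    (g : (Fin N → ℝ) → Fin d → ℝ) (hg : Measurable g)
    (hmem : ∀ᵐ x ∂(volume.restrict Q.set), g x ∈ cbAvg Q f) :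
    ∃ K : (Fin N → ℝ) → (Fin N → ℝ) → ℝ,
      Measurable (Function.uncurry K) ∧
      (∀ x y, |K x y| ≤ (Q.vol)⁻¹) ∧
      ∀ᵐ x ∂(volume.restrict Q.set), g x = fun i => ∫ y in Q.set, K x y * f y i := by
  classical
  have hb : 0 ≤ (Q.vol)⁻¹ := inv_nonneg.mpr (pow_nonneg Q.side_pos.le N)
  set μ := volume.restrict Q.set with hμdef
  have hQset : Q.set = Set.pi Set.univ fun i => Set.Ico (Q.corner i) (Q.corner i + Q.side) := by
    ext x
    simp [Cube.set, Set.mem_pi, Set.mem_Ico]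
  have hQvol : volume Q.set < ⊤ := by
    rw [hQset, volume_pi_pi]
    exact ENNReal.prod_lt_top fun i _ => by simp [Real.volume_Ico]
  haveI : IsFiniteMeasure μ := ⟨by rw [hμdef, Measure.restrict_apply_univ]; exact hQvol⟩
  have hfaesm : AEStronglyMeasurable f μ := hf.aestronglyMeasurable
  set F : (Fin N → ℝ) → Fin d → ℝ := hfaesm.mk f with hFdef
  have hFm : Measurable F := hfaesm.stronglyMeasurable_mk.measurable
  have hfF : f =ᵐ[μ] F := hfaesm.ae_eq_mk
  have hFi : Integrable F μ := hf.congr hfF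
  have hmem' : ∀ᵐ x ∂μ, ∃ φ : (Fin N → ℝ) → ℝ, Measurable φ ∧ (∀ y, |φ y| ≤ 1) ∧
      ∀ i, g x i = (Q.vol)⁻¹ * ∫ y, φ y * F y i ∂μ := by
    filter_upwards [hmem] with x hx
    obtain ⟨φ, hφm, hφb, hφv⟩ := hx
    refine ⟨φ, hφm, hφb, fun i => ?_⟩
    have h1 : g x i = avg Q fun z => φ z * f z i := congrFun hφv i
    rw [h1, avg]
    congr 1
    refine integral_congr_ae ?_
    filter_upwards [hfF] with y hy
    rw [hy]
  obtain ⟨K, hKm, hKb, hKae⟩ :=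
    CBDProof.abstract_selection hFm hFi hb hg hmem'
  refine ⟨K, hKm, hKb, ?_⟩
  filter_upwards [hKae] with x h1
  funext i
  rw [h1 i]
  refine integral_congr_ae ?_
  filter_upwards [hfF] with y hy
  rw [hy]

end CBD
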